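/- arXiv:1610.01785 — 6 statements merged into one kernel-verified Lean document; each statement's English description precedes it below -/
import Mathlib

section
/- Let d ≥ 3 and let ℓ_j(z) = m z + α_j (1 - |m|) e^{2πi j/d} for j = 1,…,d, where m ∈ ℂ with 0.98 < |m| < 1 and each α_j ∈ ℂ satisfies 3/5 < |α_j| < 1 and |arg α_j| < π/20. Then for every z in the closed disk of radius 1/10 centered at 0, there exists j ∈ {1,…,d} such that ℓ_j⁻¹(z) = (z - α_j(1-|m|)e^{2πi j/d})/m lies in the open disk of radius 1/10 centered at 0. Equivalently, the union of the images ℓ_j(D(0,1/10)) covers the closed disk of radius 1/10. -/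
open Complex Metric Real

set_option maxHeartbeats 1000000 in
/-- Covering property for the affine IFS with `d ≥ 3` branches directed by the
`d`-th roots of unity: every point of the closed disk of radius `1/10` has a
preimage under some branch `ℓ_j` in the open disk of radius `1/10`. -/
theorem stmt0 (d : ℕ) (hd : 3 ≤ d) (m : ℂ)
    (hm1 : 0.98 < ‖m‖) (hm2 : ‖m‖ < 1)
    (α : Fin d → ℂ)
    (hα1 : ∀ j, 3 / 5 < ‖α j‖)
    (hα2 : ∀ j, ‖α j‖ < 1)
    (hα3 : ∀ j, |Complex.arg (α j)| < π / 20)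
    (z : ℂ) (hz : ‖z‖ ≤ 1 / 10) :
    ∃ j : Fin d,
      ‖(z - α j * (1 - (‖m‖ : ℂ)) *
            Complex.exp (2 * π * Complex.I * ((j : ℕ) : ℂ) / (d : ℂ))) / m‖
        < 1 / 10 := by
  have hπ : (0:ℝ) < π := Real.pi_pos
  have hπ1 : π < 3.15 := Real.pi_lt_d2
  have hπ2 : 3.14 < π := Real.pi_gt_d2
  have hd0 : (0:ℝ) < (d:ℝ) := by exact_mod_cast (by omega : 0 < d)
  have hd3 : (3:ℝ) ≤ (d:ℝ) := by exact_mod_cast hd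
  have hdz : ((d:ℤ)) ≠ 0 := by exact_mod_cast (by omega : d ≠ 0)
  have hm0 : 0 < ‖m‖ := by norm_num at hm1; linarith
  set ε : ℝ := 1 - ‖m‖ with hεdef
  have hε0 : 0 < ε := by rw [hεdef]; linarith
  have hε2 : ε < 1/50 := by rw [hεdef]; norm_num at hm1; linarith
  set φ : ℝ := Complex.arg z with hφdef
  set n : ℤ := round (φ * d / (2 * π)) with hndef
  have hmod0 : 0 ≤ n % (d:ℤ) := Int.emod_nonneg n hdz
  have hmodlt : n % (d:ℤ) < (d:ℤ) := Int.emod_lt_of_pos n (by exact_mod_cast (by omega : 0 < d))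
  refine ⟨⟨(n % (d:ℤ)).toNat, by omega⟩, ?_⟩
  set j : Fin d := ⟨(n % (d:ℤ)).toNat, by omega⟩ with hjdef
  set r : ℝ := ‖z‖ with hrdef
  set a : ℝ := ‖α j‖ with hadef
  set β : ℝ := Complex.arg (α j) with hβdef
  set q : ℤ := n / (d:ℤ) with hqdef
  have hjn : ((j:ℕ) : ℤ) = n - (d:ℤ) * q := by
    simp only [hjdef]
    rw [Int.toNat_of_nonneg hmod0, Int.emod_def]
  set θ : ℝ := 2 * π * ((j:ℕ) : ℝ) / d with hθdef
  set s : ℝ := a * ε with hsdef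
  set δ : ℝ := φ - (θ + β) with hδdef
  -- rewrite the branch point in polar form
  have hw : α j * (1 - (‖m‖ : ℂ)) *
      Complex.exp (2 * π * Complex.I * ((j : ℕ) : ℂ) / (d : ℂ)) =
      Complex.exp ((↑(θ + β)) * Complex.I) * (s:ℂ) := by
    have h1 : (2 * π * Complex.I * ((j : ℕ) : ℂ) / (d : ℂ)) = (θ:ℝ) * Complex.I := by
      rw [hθdef]
      push_cast
      have : (d:ℂ) ≠ 0 := by exact_mod_cast (by positivity : (d:ℝ) ≠ 0)
      field_simp
    have h2 : α j = (a:ℂ) * Complex.exp ((β:ℝ) * Complex.I) :=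
      (Complex.norm_mul_exp_arg_mul_I (α j)).symm
    have h3 : (1 - (‖m‖ : ℂ)) = (ε:ℂ) := by rw [hεdef]; push_cast; ring
    rw [h1, h2, h3, hsdef,
      show ((θ + β : ℝ) : ℂ) * Complex.I = (θ:ℝ) * Complex.I + (β:ℝ) * Complex.I by
        push_cast; ring, Complex.exp_add]
    push_cast
    ring
  have hzpolar : Complex.exp ((↑(θ + β)) * Complex.I) * ((r:ℂ) * Complex.exp ((δ:ℝ) * Complex.I)) = z := by
    calc Complex.exp ((↑(θ + β)) * Complex.I) * ((r:ℂ) * Complex.exp ((δ:ℝ) * Complex.I))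
        = (r:ℂ) * Complex.exp ((↑(θ + β)) * Complex.I + (δ:ℝ) * Complex.I) := by
          rw [Complex.exp_add]; ring
      _ = (r:ℂ) * Complex.exp ((φ:ℝ) * Complex.I) := by
          rw [show ((↑(θ + β)) * Complex.I + (δ:ℝ) * Complex.I : ℂ) = (φ:ℝ) * Complex.I by
            rw [hδdef]; push_cast; ring]
      _ = z := Complex.norm_mul_exp_arg_mul_I z
  -- the squared distance
  have habssq : ‖z - α j * (1 - (‖m‖ : ℂ)) *
      Complex.exp (2 * π * Complex.I * ((j : ℕ) : ℂ) / (d : ℂ))‖^2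
      = r^2 + s^2 - 2*r*s*Real.cos δ := by
    rw [hw]
    conv_lhs => rw [← hzpolar]
    rw [← mul_sub, norm_mul, Complex.norm_exp_ofReal_mul_I, one_mul]
    rw [Complex.sq_norm, Complex.normSq_apply]
    simp [Complex.exp_mul_I, Complex.mul_re, Complex.mul_im, Complex.cos_ofReal_re,
      Complex.sin_ofReal_re, Complex.cos_ofReal_im, Complex.sin_ofReal_im]
    linear_combination (r:ℝ)^2 * Real.sin_sq_add_cos_sq δ
  -- cos δ is bounded below
  have hδq : δ = (φ - 2*π*n/d - β) + q * (2 * π) := by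
    rw [hδdef, hθdef]
    have : ((j:ℕ) : ℝ) = (n:ℝ) - (d:ℝ) * (q:ℝ) := by exact_mod_cast hjn
    rw [this]
    field_simp
    ring
  have hcosδ : Real.cos δ = Real.cos (φ - 2*π*n/d - β) := by
    rw [hδq, Real.cos_add_int_mul_two_pi]
  have hround : |φ * d / (2*π) - n| ≤ 1/2 := abs_sub_round _
  have hang1 : |φ - 2*π*n/d| ≤ π / d := by
    have he : φ - 2*π*n/d = (2*π/d) * (φ * d / (2*π) - n) := by field_simp
    rw [he, abs_mul, abs_of_pos (by positivity : (0:ℝ) < 2*π/d)]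
    calc 2*π/d * |φ * d / (2*π) - n| ≤ 2*π/d * (1/2) := by
          apply mul_le_mul_of_nonneg_left hround (by positivity)
      _ = π / d := by ring
  have hang2 : |φ - 2*π*n/d - β| ≤ π/3 + π/20 := by
    have h1 : |φ - 2*π*n/d - β| ≤ |φ - 2*π*n/d| + |β| := abs_sub _ _
    have h2 : π / d ≤ π / 3 := by
      apply div_le_div_of_nonneg_left hπ.le (by norm_num) hd3
    have h3 := (hα3 j)
    rw [← hβdef] at h3
    linarith
  have hLbound : (1:ℝ)/3 < Real.cos (π/3 + π/20) := by
    rw [Real.cos_add, Real.cos_pi_div_three, Real.sin_pi_div_three]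
    have hs : Real.sin (π/20) ≤ π/20 := Real.sin_le (by positivity)
    have hs0 : 0 ≤ Real.sin (π/20) := Real.sin_nonneg_of_nonneg_of_le_pi (by positivity) (by linarith)
    have hc : 1 - (π/20)^2/2 ≤ Real.cos (π/20) := Real.one_sub_sq_div_two_le_cos
    have h3 : Real.sqrt 3 < 1.7325 := by
      nlinarith [Real.sq_sqrt (by norm_num : (0:ℝ) ≤ 3), Real.sqrt_nonneg 3]
    have h30 : 0 ≤ Real.sqrt 3 := Real.sqrt_nonneg 3
    nlinarith
  have hcos : 1/3 < Real.cos δ := by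
    rw [hcosδ, ← Real.cos_abs]
    have := Real.cos_le_cos_of_nonneg_of_le_pi (abs_nonneg (φ - 2*π*n/d - β))
      (by linarith : π/3 + π/20 ≤ π) hang2
    linarith
  -- numeric bounds
  have hr0 : 0 ≤ r := norm_nonneg z
  have hr1 : r ≤ 1/10 := hz
  have ha1 : 3/5 < a := hα1 j
  have ha2 : a < 1 := hα2 j
  have hs1 : 3/5 * ε < s := by rw [hsdef]; nlinarith
  have hs2 : s < ε := by rw [hsdef]; nlinarith
  have hs0 : 0 < s := by nlinarith
  have hcos1 : Real.cos δ ≤ 1 := Real.cos_le_one δ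
  -- the key inequality
  have hkey : r^2 + s^2 - 2*r*s*Real.cos δ < ((1-ε)/10)^2 := by
    have hfac : (1/10 - r) * (1/10 + r - 2*s*Real.cos δ) ≥ 0 := by
      apply mul_nonneg (by linarith)
      nlinarith
    nlinarith
  -- conclude
  rw [norm_div, div_lt_iff₀ hm0]
  have hmε : ‖m‖ = 1 - ε := by rw [hεdef]; ring
  apply lt_of_pow_lt_pow_left₀ 2 (by positivity)
  rw [habssq, hmε]
  calc r^2 + s^2 - 2*r*s*Real.cos δ < ((1-ε)/10)^2 := hkey
    _ = (1/10 * (1-ε))^2 := by ring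
end

section
/- Let z = ρe^{iθ} with 0 ≤ ρ ≤ 1/10 and |θ| ≤ π/3, let m ∈ ℂ with 0.98 < |m| < 1, and let α ∈ ℂ with 3/5 < |α| < 1 and |arg α| < π/20. Then |z - α(1-|m|)| < |m|/10. -/
open Complex Metric Real

/-- Lower bound for cosine on `[0, 1.2043]`. -/
lemma cos_lb_aux {x : ℝ} (hx0 : 0 ≤ x) (hx : x ≤ 1.2043) :
    (0.348 : ℝ) < Real.cos x := by
  have h4 : |x / 4| ≤ 1 := by
    rw [_root_.abs_of_nonneg (by linarith : (0:ℝ) ≤ x / 4)]; linarith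
  have hb := Real.cos_bound h4
  rw [_root_.abs_of_nonneg (by linarith : (0:ℝ) ≤ x / 4)] at hb
  have hb' := (abs_le.mp hb).1
  have hx4 : x / 4 ≤ 0.301075 := by linarith
  have hx40 : (0:ℝ) ≤ x / 4 := by linarith
  have hy : (0.95424 : ℝ) ≤ Real.cos (x / 4) := by
    nlinarith [mul_nonneg hx40 hx40,
      mul_nonneg (mul_nonneg hx40 hx40) hx40,
      mul_nonneg (mul_nonneg (mul_nonneg hx40 hx40) hx40) hx40]
  have h2 := Real.cos_two_mul (x / 4)
  have e2 : 2 * (x / 4) = x / 2 := by ring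
  rw [e2] at h2
  have hy2 : (0.8211 : ℝ) ≤ Real.cos (x / 2) := by
    nlinarith [sq_nonneg (Real.cos (x / 4) - 0.95424)]
  have h1 := Real.cos_two_mul (x / 2)
  have e1 : 2 * (x / 2) = x := by ring
  rw [e1] at h1
  nlinarith [sq_nonneg (Real.cos (x / 2) - 0.8211)]

/-- The purely real-variable core inequality. -/
lemma main_ineq_aux (ρ t r C cθ sθ cψ sψ : ℝ)
    (hρ0 : 0 ≤ ρ) (hρ1 : ρ ≤ 1 / 10) (ht0 : 0 < t) (ht2 : t < 0.02)
    (hr1 : 3 / 5 < r) (hr2 : r < 1)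
    (pyθ : sθ ^ 2 + cθ ^ 2 = 1) (pyψ : sψ ^ 2 + cψ ^ 2 = 1)
    (hC : C = cθ * cψ + sθ * sψ) (hC2 : (0.348 : ℝ) < C) :
    (ρ * cθ - r * cψ * t) ^ 2 + (ρ * sθ - r * sψ * t) ^ 2 < ((1 - t) / 10) ^ 2 := by
  have expand : (ρ * cθ - r * cψ * t) ^ 2 + (ρ * sθ - r * sψ * t) ^ 2
      = ρ ^ 2 + (r * t) ^ 2 - 2 * ρ * (r * t) * C := by
    rw [hC]; linear_combination ρ ^ 2 * pyθ + (r * t) ^ 2 * pyψ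
  rw [expand]
  have a2 : 0 ≤ (r - 3/5) * (ρ * t) :=
    mul_nonneg (by linarith) (mul_nonneg hρ0 ht0.le)
  have a3 : 0 ≤ (C - 0.348) * (ρ * t * r) :=
    mul_nonneg (by linarith) (mul_nonneg (mul_nonneg hρ0 ht0.le) (by linarith))
  have a4 : 0 ≤ (1 - r) * (1 + r) * t ^ 2 :=
    mul_nonneg (mul_nonneg (by linarith) (by linarith)) (sq_nonneg t)
  have a7 : 0 ≤ (1/10 - ρ) * (1/10 + ρ - 0.4176 * t) :=
    mul_nonneg (by linarith) (by nlinarith)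
  have a8 : 0 < t * (0.02176 - 0.99 * t) :=
    mul_pos ht0 (by linarith)
  nlinarith [a2, a3, a4, a7, a8]

/-- Core estimate for the inverse branch `ℓ₀⁻¹`: if `z = ρ e^{iθ}` lies in the
sector `{|z| ≤ 1/10, |arg z| ≤ π/3}`, `0.98 < |m| < 1`, and `α` satisfies
`3/5 < |α| < 1` and `|arg α| < π/20`, then `|z - α(1-|m|)| < |m|/10`. -/
theorem stmt2 (ρ θ : ℝ) (hρ0 : 0 ≤ ρ) (hρ1 : ρ ≤ 1 / 10) (hθ : |θ| ≤ π / 3)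
    (m : ℂ) (hm1 : 0.98 < ‖m‖) (hm2 : ‖m‖ < 1)
    (α : ℂ) (hα1 : 3 / 5 < ‖α‖) (hα2 : ‖α‖ < 1)
    (hα3 : |Complex.arg α| < π / 20) :
    ‖(ρ : ℂ) * Complex.exp (θ * Complex.I) -
        α * (1 - (‖m‖ : ℂ))‖ < ‖m‖ / 10 := by
  set r : ℝ := ‖α‖ with hrdef
  set ψ : ℝ := Complex.arg α with hψdef
  -- cosine bound
  have hπ : π < 3.141593 := Real.pi_lt_d6
  have hπ0 : 0 < π := Real.pi_pos
  have hx1 : |θ - ψ| ≤ 23 * π / 60 := by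
    calc |θ - ψ| ≤ |θ| + |ψ| := abs_sub θ ψ
    _ ≤ π / 3 + π / 20 := by linarith [le_of_lt hα3]
    _ = 23 * π / 60 := by ring
  have hxle : |θ - ψ| ≤ 1.2043 := by nlinarith
  have hC : (0.348 : ℝ) < Real.cos (θ - ψ) := by
    rw [← Real.cos_abs]
    exact cos_lb_aux (abs_nonneg _) hxle
  -- replace |m| by an opaque variable M
  obtain ⟨M, hM⟩ : ∃ M : ℝ, ‖m‖ = M := ⟨_, rfl⟩
  rw [hM] at hm1 hm2 ⊢
  -- polar form of α
  have hαeq : α = (r : ℂ) * Complex.exp ((ψ : ℂ) * Complex.I) :=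
    (Complex.norm_mul_exp_arg_mul_I α).symm
  rw [hαeq]
  have hpos : (0 : ℝ) ≤ M / 10 := by linarith
  refine lt_of_pow_lt_pow_left₀ 2 hpos ?_
  rw [Complex.sq_norm]
  simp only [Complex.normSq_apply, Complex.sub_re, Complex.sub_im, Complex.mul_re,
    Complex.mul_im, Complex.exp_mul_I, Complex.add_re, Complex.add_im,
    Complex.ofReal_re, Complex.ofReal_im, Complex.I_re, Complex.I_im,
    Complex.cos_ofReal_re, Complex.cos_ofReal_im, Complex.sin_ofReal_re,
    Complex.sin_ofReal_im, Complex.one_re, Complex.one_im]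
  have key := main_ineq_aux ρ (1 - M) r (Real.cos (θ - ψ))
    (Real.cos θ) (Real.sin θ) (Real.cos ψ) (Real.sin ψ)
    hρ0 hρ1 (by linarith) (by linarith) hα1 hα2
    (Real.sin_sq_add_cos_sq θ) (Real.sin_sq_add_cos_sq ψ)
    (Real.cos_sub θ ψ) hC
  nlinarith [key]
end

section
/- Let m ∈ ℂ with 0.99 < |m| < 1 and |arg(m) - π/2| < π/50, and let α ∈ ℂ with 0.9 < |α| < 1. Let ℓ_±(z) = m z ± α(1-|m|). Then the four maps ℓ_+∘ℓ_+, ℓ_+∘ℓ_-, ℓ_-∘ℓ_+, ℓ_-∘ℓ_- satisfy the covering property on the disk D(0, 1/10): the union of their images of D(0,1/10) contains the closed disk of radius 1/10. -/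
open Complex Metric Real

private lemma stmt4_key (x q c2 e : ℝ) (hx0 : 0 ≤ x) (hx : x ≤ 1/10) (he0 : 0 < e)
    (he1 : e < 1/100) (hq : 81/100 * (e * x) ≤ q) (hc : c2 ≤ 4 * e^2) :
    x^2 - 2*q + c2 < ((1-e)^2/10)^2 := by
  nlinarith [mul_nonneg (by linarith : (0:ℝ) ≤ 1/10 - x) hx0,
    mul_nonneg (by linarith : (0:ℝ) ≤ 1/100 - e) (by linarith : (0:ℝ) ≤ 1/10 - x),
    mul_pos (mul_pos he0 he0) (by linarith : (0:ℝ) < 1/100 - e),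
    mul_pos he0 (by linarith : (0:ℝ) < 1/100 - e), sq_nonneg (e^2)]

set_option maxHeartbeats 1000000 in
/-- Covering property for the two-branch IFS `ℓ_±(z) = mz ± α(1-|m|)` with `m`
nearly imaginary: the four two-fold compositions of `ℓ_+`, `ℓ_-` applied to the
open disk `D(0,1/10)` cover the closed disk of radius `1/10`. -/
theorem stmt4 (m : ℂ) (hm1 : 0.99 < ‖m‖) (hm2 : ‖m‖ < 1)
    (harg : |Complex.arg m - π / 2| < π / 50)
    (α : ℂ) (hα1 : 0.9 < ‖α‖) (hα2 : ‖α‖ < 1)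
    (ℓ : ℂ → ℂ → ℂ)
    (hℓ : ∀ s z, ℓ s z = m * z + s * α * (1 - (‖m‖ : ℂ)))
    (z : ℂ) (hz : ‖z‖ ≤ 1 / 10) :
    ∃ s₁ ∈ ({1, -1} : Set ℂ), ∃ s₂ ∈ ({1, -1} : Set ℂ),
      ∃ w : ℂ, ‖w‖ < 1 / 10 ∧ ℓ s₁ (ℓ s₂ w) = z := by
  have hpi2 : π / 50 < 0.063 := by
    have := Real.pi_lt_d2; nlinarith
  have hpi0 : 0 < π := Real.pi_pos
  set r : ℝ := ‖m‖ with hrdef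
  have hm0 : m ≠ 0 := by
    intro h
    rw [hrdef, h] at hm1; simp at hm1; norm_num at hm1
  -- bounds on real/imaginary parts of m
  have hcos : Real.cos (Complex.arg m) = m.re / r := Complex.cos_arg hm0
  have hsin : Real.sin (Complex.arg m) = m.im / r := Complex.sin_arg m
  have habs_cos : |Real.cos (Complex.arg m)| < 0.063 := by
    have h1 : Real.cos (Complex.arg m) = Real.sin (π / 2 - Complex.arg m) := by
      rw [Real.sin_pi_div_two_sub]
    rw [h1]
    calc |Real.sin (π / 2 - Complex.arg m)| ≤ |π / 2 - Complex.arg m| :=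
          Real.abs_sin_le_abs
      _ = |Complex.arg m - π / 2| := abs_sub_comm _ _
      _ < π / 50 := harg
      _ < 0.063 := hpi2
  have hsin_lb : 0.998 < Real.sin (Complex.arg m) := by
    have h1 : Real.sin (Complex.arg m) = Real.cos (Complex.arg m - π / 2) := by
      rw [Real.cos_sub_pi_div_two]
    rw [h1]
    have h2 : 1 - (Complex.arg m - π / 2) ^ 2 / 2 ≤ Real.cos (Complex.arg m - π / 2) :=
      Real.one_sub_sq_div_two_le_cos
    have h3 : (Complex.arg m - π / 2) ^ 2 < 0.063 ^ 2 := by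
      have := abs_lt.mp (lt_trans harg hpi2)
      nlinarith [this.1, this.2]
    nlinarith
  have hre_m : |m.re| < 0.063 := by
    have : m.re = r * Real.cos (Complex.arg m) := by
      rw [hcos]; field_simp
    rw [this, abs_mul, abs_of_pos (by linarith : (0:ℝ) < r)]
    nlinarith [abs_nonneg (Real.cos (Complex.arg m))]
  have him_m : 0.98 < m.im := by
    have : m.im = r * Real.sin (Complex.arg m) := by
      rw [hsin]; field_simp
    rw [this]; nlinarith
  -- setup
  set e : ℝ := 1 - r with hedef
  have he0 : 0 < e := by simp [hedef]; linarith
  have he1 : e < 0.01 := by simp [hedef]; linarith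
  set v : ℂ := (starRingEnd ℂ) z * α with hvdef
  set A : ℝ := (m * v).re with hAdef
  set B : ℝ := v.re with hBdef
  have hvabs : ‖v‖ = ‖z‖ * ‖α‖ := by
    rw [hvdef, norm_mul, Complex.norm_conj]
  have hABv : 0.9 * ‖v‖ ≤ |A| + |B| := by
    have h1 : ‖v‖ ≤ |v.re| + |v.im| := Complex.norm_le_abs_re_add_abs_im v
    have hA : A = m.re * v.re - m.im * v.im := by rw [hAdef, Complex.mul_re]
    have h2 : m.im * |v.im| - |m.re| * |v.re| ≤ |A| := by
      rw [hA]
      have := abs_sub_abs_le_abs_sub (m.im * v.im) (m.re * v.re)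
      rw [abs_mul, abs_mul] at this
      have h4 : |m.im| = m.im := abs_of_pos (by linarith)
      calc m.im * |v.im| - |m.re| * |v.re| = |m.im| * |v.im| - |m.re| * |v.re| := by rw [h4]
        _ ≤ |m.im * v.im - m.re * v.re| := this
        _ = |m.re * v.re - m.im * v.im| := abs_sub_comm _ _
    nlinarith [abs_nonneg v.re, abs_nonneg v.im, abs_nonneg m.re,
      abs_le.mp (le_refl |v.re|)]
  -- sign choices
  set σ₁ : ℝ := if 0 ≤ B then 1 else -1 with hσ₁
  set σ₂ : ℝ := if 0 ≤ A then 1 else -1 with hσ₂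
  have hσ₁B : σ₁ * B = |B| := by
    rw [hσ₁]; split_ifs with h
    · rw [_root_.abs_of_nonneg h]; ring
    · rw [_root_.abs_of_neg (lt_of_not_ge h)]; ring
  have hσ₂A : σ₂ * A = |A| := by
    rw [hσ₂]; split_ifs with h
    · rw [_root_.abs_of_nonneg h]; ring
    · rw [_root_.abs_of_neg (lt_of_not_ge h)]; ring
  have hσ₁m : ((σ₁ : ℂ)) ∈ ({1, -1} : Set ℂ) := by
    rw [hσ₁]; split_ifs <;> simp
  have hσ₂m : ((σ₂ : ℂ)) ∈ ({1, -1} : Set ℂ) := by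
    rw [hσ₂]; split_ifs <;> simp
  set c : ℂ := (m * (σ₂ : ℂ) + (σ₁ : ℂ)) * α * (1 - (r : ℂ)) with hcdef
  -- Re (conj z * c)
  have hRe : ((starRingEnd ℂ) z * c).re = e * (|A| + |B|) := by
    have : (starRingEnd ℂ) z * c = ((σ₂ : ℂ) * (m * v) + (σ₁ : ℂ) * v) * ((e : ℝ) : ℂ) := by
      rw [hcdef, hvdef, hedef]; push_cast; ring
    rw [this, ← hσ₂A, ← hσ₁B]
    simp [Complex.mul_re, Complex.add_re, Complex.add_im, Complex.ofReal_re,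
      Complex.ofReal_im, ← hAdef, ← hBdef, Complex.mul_im]
    ring
  -- bound on |c|
  have hcabs : ‖c‖ ≤ 2 * e := by
    have hσ₁abs : ‖(σ₁ : ℂ)‖ = 1 := by rw [hσ₁]; split_ifs <;> simp
    have hσ₂abs : ‖(σ₂ : ℂ)‖ = 1 := by rw [hσ₂]; split_ifs <;> simp
    have h1 : ‖m * (σ₂ : ℂ) + (σ₁ : ℂ)‖ ≤ r + 1 := by
      calc ‖m * (σ₂ : ℂ) + (σ₁ : ℂ)‖
          ≤ ‖m * (σ₂ : ℂ)‖ + ‖(σ₁ : ℂ)‖ := norm_add_le _ _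
        _ = r + 1 := by rw [norm_mul, hσ₂abs, hσ₁abs, mul_one]
    have h2 : ‖1 - (r : ℂ)‖ = e := by
      rw [hedef]
      rw [show (1 - (r : ℂ)) = ((1 - r : ℝ) : ℂ) by push_cast; ring]
      rw [Complex.norm_real, Real.norm_eq_abs, abs_of_pos (by linarith : (0:ℝ) < 1 - r)]
    have h3 : ‖c‖ = ‖m * (σ₂ : ℂ) + (σ₁ : ℂ)‖ * ‖α‖ * e := by
      rw [hcdef, norm_mul, norm_mul, h2]
    rw [h3]
    have h4 : (0:ℝ) ≤ ‖m * (σ₂ : ℂ) + (σ₁ : ℂ)‖ := norm_nonneg _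
    have h5 : (0:ℝ) ≤ ‖α‖ := norm_nonneg _
    nlinarith [mul_le_mul h1 (le_of_lt hα2) h5 (by linarith : (0:ℝ) ≤ r + 1)]
  -- main distance estimate
  have hkey : ‖z - c‖ < r ^ 2 / 10 := by
    have hnsq : Complex.normSq (z - c) =
        Complex.normSq z - 2 * ((starRingEnd ℂ) z * c).re + Complex.normSq c := by
      simp [Complex.normSq_apply, Complex.mul_re, Complex.sub_re, Complex.sub_im,
        Complex.conj_re, Complex.conj_im]
      ring
    have hsq : ‖z - c‖ ^ 2 < (r ^ 2 / 10) ^ 2 := by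
      rw [Complex.sq_norm, hnsq, hRe]
      have h1 : Complex.normSq z = ‖z‖ ^ 2 := (Complex.sq_norm z).symm
      have h2 : Complex.normSq c = ‖c‖ ^ 2 := (Complex.sq_norm c).symm
      rw [h1, h2]
      have hAB : 81/100 * (e * ‖z‖) ≤ e * (|A| + |B|) := by
        have : 0.9 * ‖z‖ ≤ ‖v‖ := by
          rw [hvabs]; nlinarith [norm_nonneg z]
        nlinarith
      have hc2 : ‖c‖ ^ 2 ≤ 4 * e ^ 2 := by
        nlinarith [norm_nonneg c]
      have hr1 : r = 1 - e := by rw [hedef]; ring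
      rw [hr1]
      have hx0 : (0:ℝ) ≤ ‖z‖ := norm_nonneg _
      exact stmt4_key (‖z‖) (e * (|A| + |B|)) (‖c‖ ^ 2) e hx0 hz he0
        (by norm_num at he1 ⊢; linarith) hAB hc2
    exact lt_of_pow_lt_pow_left₀ 2 (by positivity) hsq
  -- construct w
  refine ⟨(σ₁ : ℂ), hσ₁m, (σ₂ : ℂ), hσ₂m, (z - c) / m ^ 2, ?_, ?_⟩
  · rw [norm_div, norm_pow]
    rw [div_lt_iff₀ (by positivity)]
    calc ‖z - c‖ < r ^ 2 / 10 := hkey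
      _ = 1 / 10 * r ^ 2 := by ring
  · rw [hℓ, hℓ]
    field_simp
    rw [hcdef]
    push_cast
    ring
end

section
/- Let q̃(w̃) = (1/2)κ^{2/3}(8w̃³ - 1), the conjugate of q(w) = w³ - κ under w̃ = (1/2)κ^{-1/3}w. For |κ| sufficiently large, q̃⁻¹(𝔻) has three components, respectively contained in D((1/2)ζ, (1/2)|κ|^{-2/3}) for ζ ∈ {1, j, j²} the cube roots of unity, and each inverse branch q̃_ζ⁻¹ : 𝔻 → 𝔻 satisfies |(q̃_ζ⁻¹)'| ≤ |κ|^{-2/3} on 𝔻. -/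
open Complex Metric Real

lemma cubeRootEst {u : ℂ} (hu : ‖u‖ ≤ 1/10) :
    ‖Complex.exp (Complex.log (1+u)/3) - 1‖ ≤ (1/2) * ‖u‖ := by
  have hnn : (0:ℝ) ≤ ‖u‖ := norm_nonneg u
  have h1 : ‖u‖ < 1 := by linarith
  have hlog : ‖Complex.log (1+u)‖ ≤ (19/18) * ‖u‖ := by
    refine (Complex.norm_log_one_add_le h1).trans ?_
    have h2 : (1 - ‖u‖)⁻¹ ≤ 10/9 := by
      rw [inv_le_comm₀ (by linarith) (by norm_num)]
      linarith
    have h3 : ‖u‖ ^ 2 * (1 - ‖u‖)⁻¹ / 2 ≤ ‖u‖ * (1/10) * (10/9) / 2 := by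
      have h4 : ‖u‖^2 ≤ ‖u‖ * (1/10) := by rw [sq]; nlinarith
      nlinarith [norm_nonneg u]
    linarith
  set w : ℂ := Complex.log (1+u)/3 with hwdef
  have hw : ‖w‖ ≤ (19/54) * ‖u‖ := by
    rw [hwdef, norm_div]
    simp only [Complex.norm_ofNat]
    linarith [hlog]
  have hw1 : ‖w‖ ≤ 1 := by nlinarith
  calc ‖Complex.exp w - 1‖
      ≤ ‖Complex.exp w - 1 - w‖ + ‖w‖ := by
        have := norm_add_le (Complex.exp w - 1 - w) w
        simpa using this
    _ ≤ ‖w‖ ^ 2 + ‖w‖ := by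
        linarith [Complex.norm_exp_sub_one_sub_id_le hw1]
    _ ≤ (1/2) * ‖u‖ := by nlinarith [norm_nonneg w]

lemma absOneOfPow3 {ζ : ℂ} (h : ζ ^ 3 = 1) : ‖ζ‖ = 1 := by
  have h1 : ‖ζ‖ ^ 3 = 1 := by rw [← norm_pow, h, norm_one]
  nlinarith [norm_nonneg ζ, sq_nonneg (‖ζ‖ - 1), sq_nonneg (‖ζ‖ + 1)]

lemma cube3 {u : ℂ} (h : (1:ℂ) + u ≠ 0) :
    (Complex.exp (Complex.log (1+u)/3)) ^ 3 = 1 + u := by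
  have h1 : Complex.exp (Complex.log (1+u)/3) ^ 3
      = Complex.exp (Complex.log (1+u)/3 + Complex.log (1+u)/3 + Complex.log (1+u)/3) := by
    rw [Complex.exp_add, Complex.exp_add]; ring
  have h2 : Complex.log (1+u)/3 + Complex.log (1+u)/3 + Complex.log (1+u)/3
      = Complex.log (1+u) := by ring
  rw [h1, h2, Complex.exp_log h]

lemma oneAddLower {u : ℂ} (hu : ‖u‖ ≤ 1/10) : (9:ℝ)/10 ≤ ‖1+u‖ := by
  have h1 := norm_add_le (1+u) (-u)
  simp only [add_neg_cancel_right, norm_neg, norm_one] at h1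
  linarith

/-- Rescaled cubic `q̃(w̃) = (1/2)κ^{2/3}(8w̃³ - 1)` (the conjugate of
`q(w) = w³ - κ` under `w̃ = (1/2)κ^{-1/3} w`): for `|κ|` large, every point of
`q̃⁻¹(𝔻)` lies within `(1/2)|κ|^{-2/3}` of a half cube root of unity `ζ/2`,
and for each cube root of unity `ζ` there is a holomorphic inverse branch
`q̃_ζ⁻¹ : 𝔻 → D(ζ/2, (1/2)|κ|^{-2/3})` with `|(q̃_ζ⁻¹)'| ≤ |κ|^{-2/3}` on `𝔻`. -/
theorem stmt10 :
    ∃ K > 0, ∀ κ : ℂ, K ≤ ‖κ‖ → ∀ c : ℂ, c ^ 3 = κ →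
      (∀ w : ℂ, (1 / 2) * c ^ 2 * (8 * w ^ 3 - 1) ∈ ball (0 : ℂ) 1 →
        ∃ ζ : ℂ, ζ ^ 3 = 1 ∧
          ‖w - ζ / 2‖ < (1 / 2) * ‖κ‖ ^ (-(2 : ℝ) / 3)) ∧
      (∀ ζ : ℂ, ζ ^ 3 = 1 →
        ∃ g : ℂ → ℂ, DifferentiableOn ℂ g (ball 0 1) ∧
          (∀ x ∈ ball (0 : ℂ) 1,
            (1 / 2) * c ^ 2 * (8 * (g x) ^ 3 - 1) = x ∧
            ‖g x - ζ / 2‖ < (1 / 2) * ‖κ‖ ^ (-(2 : ℝ) / 3)) ∧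
          (∀ x ∈ ball (0 : ℂ) 1,
            ‖deriv g x‖ ≤ ‖κ‖ ^ (-(2 : ℝ) / 3))) := by
  refine ⟨1000, by norm_num, ?_⟩
  intro κ hκ c hc
  have hκ0 : κ ≠ 0 := by
    intro h; rw [h] at hκ; simp at hκ; linarith
  have hc0 : c ≠ 0 := by
    intro h; apply hκ0; rw [← hc, h]; ring
  have hc20 : c^2 ≠ 0 := pow_ne_zero 2 hc0
  set A := ‖κ‖ ^ ((2:ℝ)/3) with hAdef
  have habsc : ‖c‖ ^ 3 = ‖κ‖ := by rw [← norm_pow, hc]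
  have hA : A = ‖c‖ ^ 2 := by
    rw [hAdef, ← habsc, ← Real.rpow_natCast (‖c‖) 3,
      ← Real.rpow_mul (norm_nonneg c)]
    norm_num
  have hA100 : (100:ℝ) ≤ A := by
    have h1 : ((1000:ℝ)) ^ ((2:ℝ)/3) ≤ A :=
      Real.rpow_le_rpow (by norm_num) hκ (by norm_num)
    have h2 : ((1000:ℝ)) ^ ((2:ℝ)/3) = 100 := by
      rw [show (1000:ℝ) = 10 ^ (3:ℕ) by norm_num, ← Real.rpow_natCast 10 3,
        ← Real.rpow_mul (by norm_num)]
      norm_num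
    linarith
  have hA0 : (0:ℝ) < A := by linarith
  have hneg : ‖κ‖ ^ (-(2:ℝ)/3) = A⁻¹ := by
    rw [hAdef, show (-(2:ℝ)/3) = -((2:ℝ)/3) by ring, Real.rpow_neg (norm_nonneg κ)]
  have habsc2 : ‖c^2‖ = A := by rw [norm_pow, hA]
  have h2A : (2:ℝ)/A = 2 * A⁻¹ := by rw [div_eq_mul_inv]
  have h2A10 : (2:ℝ)/A ≤ 1/10 := by
    rw [div_le_div_iff₀ hA0 (by norm_num)]; linarith
  constructor
  · -- Part 1
    intro w hw
    rw [mem_ball_zero_iff] at hw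
    have huabs : ‖8*w^3 - 1‖ < 2/A := by
      have heq : (8*w^3 - 1 : ℂ) = 2/c^2 * ((1/2) * c^2 * (8*w^3-1)) := by
        field_simp
      rw [heq, norm_mul, norm_div, habsc2, Complex.norm_ofNat]
      calc 2/A * ‖(1/2) * c^2 * (8*w^3-1)‖ < 2/A * 1 :=
            mul_lt_mul_of_pos_left hw (by positivity)
        _ = 2/A := mul_one _
    have hu10 : ‖8*w^3 - 1‖ ≤ 1/10 := by linarith
    have h1u : (1:ℂ) + (8*w^3 - 1) ≠ 0 := by
      intro h
      have h2 : (8*w^3 - 1 : ℂ) = -1 := by linear_combination h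
      rw [h2] at hu10
      rw [show (-1:ℂ) = -(1:ℂ) by norm_num, norm_neg, norm_one] at hu10
      linarith
    set a := Complex.exp (Complex.log (1+(8*w^3-1))/3) with hadef
    have ha0 : a ≠ 0 := Complex.exp_ne_zero _
    have ha3 : a ^ 3 = 1 + (8*w^3-1) := cube3 h1u
    have haest : ‖a - 1‖ ≤ (1/2) * ‖8*w^3-1‖ := cubeRootEst hu10
    have hζ3 : (2*w/a) ^ 3 = 1 := by
      rw [div_pow, ha3]
      rw [show (1:ℂ) + (8*w^3-1) = 8*w^3 by ring]
      rw [mul_pow]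
      norm_num
      intro h
      apply h1u
      rw [h]; ring
    refine ⟨2*w/a, hζ3, ?_⟩
    have hζ1 : ‖2*w/a‖ = 1 := absOneOfPow3 hζ3
    have hzeq : w - (2*w/a)/2 = (2*w/a)/2 * (a - 1) := by
      field_simp
    rw [hneg, hzeq, norm_mul, norm_div, hζ1, Complex.norm_ofNat]
    linarith
  · -- Part 2
    intro ζ hζ
    have hζ1 : ‖ζ‖ = 1 := absOneOfPow3 hζ
    have hub : ∀ x : ℂ, x ∈ ball (0:ℂ) 1 →
        ‖2/c^2*x‖ < 2/A ∧ ‖2/c^2*x‖ ≤ 1/10 := by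
      intro x hx
      rw [mem_ball_zero_iff] at hx
      have h1 : ‖2/c^2*x‖ < 2/A := by
        rw [norm_mul, norm_div, habsc2, Complex.norm_ofNat]
        calc 2/A * ‖x‖ < 2/A * 1 := mul_lt_mul_of_pos_left hx (by positivity)
          _ = 2/A := mul_one _
      exact ⟨h1, by linarith⟩
    have hslit : ∀ x : ℂ, x ∈ ball (0:ℂ) 1 → (1 + 2/c^2*x) ∈ Complex.slitPlane := by
      intro x hx
      rw [Complex.mem_slitPlane_iff]
      left
      have h1 := (hub x hx).2
      have h2 : |(2/c^2*x).re| ≤ ‖2/c^2*x‖ := Complex.abs_re_le_norm _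
      have h3 : (1 + 2/c^2*x).re = 1 + (2/c^2*x).re := by simp
      rw [h3]
      rcases abs_le.mp (le_trans h2 h1) with ⟨hl, hr⟩
      linarith
    have h1u : ∀ x : ℂ, x ∈ ball (0:ℂ) 1 → (1:ℂ) + 2/c^2*x ≠ 0 := fun x hx =>
      Complex.slitPlane_ne_zero (hslit x hx)
    have hderiv : ∀ x : ℂ, x ∈ ball (0:ℂ) 1 →
        HasDerivAt (fun y : ℂ => ζ/2 * Complex.exp (Complex.log (1 + 2/c^2*y)/3))
          (ζ/2 * (Complex.exp (Complex.log (1 + 2/c^2*x)/3) *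
          ((1 + 2/c^2*x)⁻¹ * (2/c^2) / 3))) x := by
      intro x hx
      have h0 : HasDerivAt (fun y : ℂ => 1 + 2/c^2*y) (2/c^2) x := by
        simpa using ((hasDerivAt_id x).const_mul (2/c^2)).const_add 1
      have hlog : HasDerivAt (fun y : ℂ => Complex.log (1 + 2/c^2*y))
          ((1 + 2/c^2*x)⁻¹ * (2/c^2)) x :=
        by have := (Complex.hasDerivAt_log (hslit x hx)).comp x h0; exact this
      have hdiv : HasDerivAt (fun y : ℂ => Complex.log (1 + 2/c^2*y)/3)
          ((1 + 2/c^2*x)⁻¹ * (2/c^2)/3) x := hlog.div_const 3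
      have hexp : HasDerivAt (fun y : ℂ => Complex.exp (Complex.log (1 + 2/c^2*y)/3))
          (Complex.exp (Complex.log (1 + 2/c^2*x)/3) * ((1 + 2/c^2*x)⁻¹ * (2/c^2)/3)) x :=
        (Complex.hasDerivAt_exp _).comp x hdiv
      exact hexp.const_mul (ζ/2)
    refine ⟨fun y : ℂ => ζ/2 * Complex.exp (Complex.log (1 + 2/c^2*y)/3), ?_, ?_, ?_⟩
    · intro x hx
      exact ((hderiv x hx).differentiableAt).differentiableWithinAt
    · intro x hx
      have ha3 : (Complex.exp (Complex.log (1+2/c^2*x)/3)) ^ 3 = 1 + 2/c^2*x :=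
        cube3 (h1u x hx)
      constructor
      · rw [mul_pow, ha3]
        rw [show (ζ/2)^3 = ζ^3/8 by ring, hζ]
        field_simp
        ring
      · have haest : ‖Complex.exp (Complex.log (1+2/c^2*x)/3) - 1‖ ≤
            (1/2) * ‖2/c^2*x‖ := cubeRootEst (hub x hx).2
        have hzeq : ζ/2 * Complex.exp (Complex.log (1 + 2/c^2*x)/3) - ζ/2
            = ζ/2 * (Complex.exp (Complex.log (1+2/c^2*x)/3) - 1) := by ring
        rw [hneg, hzeq, norm_mul, norm_div, hζ1, Complex.norm_ofNat]
        have huabs := (hub x hx).1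
        linarith
    · intro x hx
      rw [(hderiv x hx).deriv, hneg]
      have haest : ‖Complex.exp (Complex.log (1+2/c^2*x)/3) - 1‖ ≤
          (1/2) * ‖2/c^2*x‖ := cubeRootEst (hub x hx).2
      have hu10 := (hub x hx).2
      have habsa : ‖Complex.exp (Complex.log (1+2/c^2*x)/3)‖ ≤ 21/20 := by
        have h1 := norm_add_le (Complex.exp (Complex.log (1+2/c^2*x)/3) - 1) 1
        simp only [sub_add_cancel, norm_one] at h1
        linarith
      have h1ua : (9:ℝ)/10 ≤ ‖1+2/c^2*x‖ := oneAddLower hu10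
      have h1ua0 : (0:ℝ) < ‖1+2/c^2*x‖ := by linarith
      have hinv : (‖1+2/c^2*x‖)⁻¹ ≤ 10/9 := by
        rw [inv_le_comm₀ h1ua0 (by norm_num)]
        norm_num
        linarith
      simp only [norm_mul, norm_div, norm_inv, Complex.norm_ofNat, hζ1, habsc2]
      have h7 : ‖Complex.exp (Complex.log (1+2/c^2*x)/3)‖ *
          (‖1+2/c^2*x‖)⁻¹ ≤ 7/6 := by
        calc ‖Complex.exp (Complex.log (1+2/c^2*x)/3)‖ *
            (‖1+2/c^2*x‖)⁻¹ ≤ (21/20) * (10/9) :=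
              mul_le_mul habsa hinv (inv_nonneg.2 (norm_nonneg _)) (by norm_num)
          _ ≤ 7/6 := by norm_num
      have hApos : (0:ℝ) < A⁻¹ := inv_pos.2 hA0
      have h8 : A⁻¹ * (‖Complex.exp (Complex.log (1+2/c^2*x)/3)‖ *
          (‖1+2/c^2*x‖)⁻¹) ≤ A⁻¹ * (7/6) :=
        mul_le_mul_of_nonneg_left h7 (le_of_lt hApos)
      rw [div_eq_mul_inv 2 A]
      nlinarith [h8, hApos]
end

section
/- Let m ∈ ℂ with 0.99 < |m| < 1 and |m - 1| ≤ 1/10, α = 0.8, j = e^{2πi/3}, and suppose η₁ : D(0,1/10) × 𝔻 → ℂ satisfies |η₁| ≤ (1/100)(1-|m|). Then for every (z̃, w̃) with |z̃| = 1/10, one has |m³ z̃ + α m (1-|m|)(j² + m j + m²) + η₁(z̃,w̃)| < 1/10. -/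
open Complex Metric Real

/-- Boundary contraction estimate for the composed inverse branch
`f̃_{j²}⁻¹ ∘ f̃_j⁻¹ ∘ f̃_1⁻¹` when `|m-1| ≤ 1/10`: its first component maps the
boundary circle `|z̃| = 1/10` strictly inside `D(0,1/10)`, given the error
bound `|η₁| ≤ (1/100)(1-|m|)`. Here `j = e^{2πi/3}` and `α = 0.8`. -/
theorem stmt13 (m : ℂ) (hm1 : 0.99 < ‖m‖) (hm2 : ‖m‖ < 1)
    (hm3 : ‖m - 1‖ ≤ 1 / 10)
    (η₁ : ℂ × ℂ → ℂ)
    (hη : ∀ z w : ℂ, ‖z‖ ≤ 1 / 10 → ‖w‖ < 1 →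
      ‖η₁ (z, w)‖ ≤ (1 / 100) * (1 - ‖m‖)) :
    ∀ z w : ℂ, ‖z‖ = 1 / 10 → ‖w‖ < 1 →
      ‖(m ^ 3 * z + (0.8 : ℂ) * m * (1 - ((‖m‖ : ℝ) : ℂ)) *
          ((Complex.exp (2 * π * Complex.I / 3)) ^ 2 +
            m * Complex.exp (2 * π * Complex.I / 3) + m ^ 2) + η₁ (z, w))‖
        < 1 / 10 := by
  intro z w hz hw
  set j : ℂ := Complex.exp (2 * ↑π * Complex.I / 3) with hj
  have hjeq : (2 * (π : ℂ) * Complex.I / 3) = ((2 * π / 3 : ℝ) : ℂ) * Complex.I := by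
    push_cast; ring
  have habsj : ‖j‖ = 1 := by
    rw [hj, hjeq, Complex.norm_exp]
    simp [Complex.mul_I_re]
  have hj3 : j ^ 3 = 1 := by
    rw [hj, ← Complex.exp_nat_mul]
    have : (3 : ℂ) * (2 * ↑π * Complex.I / 3) = 2 * ↑π * Complex.I := by ring
    rw [show ((3 : ℕ) : ℂ) = (3 : ℂ) by norm_num, this, Complex.exp_two_pi_mul_I]
  have hjne : j ≠ 1 := by
    intro h
    have him : j.im = Real.sin (2 * π / 3) := by
      rw [hj, hjeq, Complex.exp_ofReal_mul_I_im]
    have hpos : 0 < Real.sin (2 * π / 3) := by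
      apply Real.sin_pos_of_pos_of_lt_pi
      · positivity
      · nlinarith [Real.pi_pos]
    rw [h] at him
    simp at him
    linarith
  have hsum : j ^ 2 + j + 1 = 0 := by
    have h0 : (j - 1) * (j ^ 2 + j + 1) = 0 := by linear_combination hj3
    rcases mul_eq_zero.mp h0 with h | h
    · exact absurd (sub_eq_zero.mp h) hjne
    · exact h
  have hkey : j ^ 2 + m * j + m ^ 2 = (m - 1) * (j + m + 1) := by
    linear_combination hsum
  rw [hkey]
  set a := ‖m‖ with ha
  have hA : ‖m ^ 3 * z‖ = a ^ 3 * (1 / 10) := by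
    rw [norm_mul, norm_pow, hz]
  have h1a : ‖1 - (a : ℂ)‖ = 1 - a := by
    rw [show (1 - (a : ℂ)) = ((1 - a : ℝ) : ℂ) by push_cast; ring, Complex.norm_real, Real.norm_eq_abs,
      _root_.abs_of_nonneg (by linarith)]
  have h08 : ‖(0.8 : ℂ)‖ = 0.8 := by
    rw [show (0.8 : ℂ) = ((0.8 : ℝ) : ℂ) by norm_num, Complex.norm_real]
    norm_num
  have hjm1 : ‖j + m + 1‖ ≤ 3 := by
    calc ‖j + m + 1‖ ≤ ‖j + m‖ + ‖(1 : ℂ)‖ := norm_add_le _ _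
      _ ≤ ‖j‖ + ‖m‖ + 1 := by
          simp only [norm_one]; gcongr; exact norm_add_le _ _
      _ ≤ 3 := by rw [habsj]; linarith
  have hB : ‖(0.8 : ℂ) * m * (1 - (a : ℂ)) * ((m - 1) * (j + m + 1))‖
      ≤ 0.8 * 1 * (1 - a) * ((1 / 10) * 3) := by
    rw [norm_mul, norm_mul, norm_mul, norm_mul, h08, h1a]
    gcongr <;> first | positivity | linarith
  have hC : ‖η₁ (z, w)‖ ≤ (1 / 100) * (1 - a) := hη z w hz.le hw
  calc ‖m ^ 3 * z + (0.8 : ℂ) * m * (1 - (a : ℂ)) * ((m - 1) * (j + m + 1))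
        + η₁ (z, w)‖
      ≤ ‖m ^ 3 * z‖ +
        ‖(0.8 : ℂ) * m * (1 - (a : ℂ)) * ((m - 1) * (j + m + 1))‖ +
        ‖η₁ (z, w)‖ := by
        exact le_trans (norm_add_le _ _) (by gcongr; exact norm_add_le _ _)
    _ ≤ a ^ 3 * (1 / 10) + 0.8 * 1 * (1 - a) * ((1 / 10) * 3) + (1 / 100) * (1 - a) := by
        rw [hA]; gcongr
    _ < 1 / 10 := by nlinarith [sq_nonneg (1 - a)]
end

section
/- Let E ⊂ ℂ be a compact set with empty interior, let Inn(E) denote the union of bounded components of ℂ \ E and Out(E) the unbounded component, and assume both Inn(E) and Out(E) are nonempty and every point of E is accumulated both by Inn(E) and by Out(E). Suppose there exists μ ∈ ℂ with |μ| = 1, μ not a root of unity, such that for all sufficiently small δ ∈ ℂ: δ ∈ Inn(E) ⟺ μδ ∈ Inn(E), and 0 ∈ E. Then a contradiction follows; i.e., no such E exists. (Equivalently: Inn(E) cannot be invariant near 0 under an irrational rotation about a point of ∂Out(E).) -/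
open Complex Metric

/-- Density of the `ℤ`-orbit of an irrational rotation on the unit circle. -/
lemma dense_zpow_circle (μ : ℂ) (hμ : ‖μ‖ = 1)
    (hμroot : ∀ n : ℕ, 0 < n → μ ^ n ≠ 1) (ζ : ℂ) (hζ : ‖ζ‖ = 1)
    {ε : ℝ} (hε : 0 < ε) : ∃ m : ℤ, ‖μ ^ m - ζ‖ < ε := by
  have hexpμ : Complex.exp (μ.arg * I) = μ := by
    have := Complex.norm_mul_exp_arg_mul_I μ
    rw [hμ] at this
    simpa using this
  have hexpζ : Complex.exp (ζ.arg * I) = ζ := by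
    have := Complex.norm_mul_exp_arg_mul_I ζ
    rw [hζ] at this
    simpa using this
  set α : ℝ := μ.arg
  set θ : ℝ := ζ.arg
  set S : AddSubgroup ℝ := AddSubgroup.closure {α, 2 * Real.pi}
  rcases S.dense_or_cyclic with hd | ⟨a, ha⟩
  · -- dense case
    set ε' : ℝ := min (ε / 2) 1 with hε'
    have hε'pos : 0 < ε' := lt_min (by linarith) one_pos
    obtain ⟨s, hsS, hds⟩ : ∃ s ∈ (S : Set ℝ), dist θ s < ε' := by
      have := hd θ
      exact Metric.mem_closure_iff.mp this ε' hε'pos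
    obtain ⟨m, n, hmn⟩ := AddSubgroup.mem_closure_pair.mp hsS
    refine ⟨m, ?_⟩
    have hzsmul : (s : ℂ) = m * α + n * (2 * Real.pi) := by
      rw [← hmn]; push_cast [zsmul_eq_mul]; ring
    have hμm : μ ^ m = Complex.exp ((s : ℂ) * I) := by
      rw [← hexpμ, ← Complex.exp_int_mul, hzsmul]
      rw [show ((m : ℂ) * α + n * (2 * Real.pi)) * I
            = (m : ℂ) * (α * I) + n * (2 * Real.pi * I) by ring]
      rw [Complex.exp_add, Complex.exp_int_mul_two_pi_mul_I, mul_one]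
    have hfactor : μ ^ m - ζ = Complex.exp ((θ : ℂ) * I) *
        (Complex.exp (((s : ℝ) - θ : ℝ) * I) - 1) := by
      rw [hμm, ← hexpζ, mul_sub, mul_one, ← Complex.exp_add]
      congr 2
      push_cast
      ring
    have habsI : ‖(((s : ℝ) - θ : ℝ) : ℂ) * I‖ = |s - θ| := by
      rw [norm_mul, Complex.norm_I, mul_one, Complex.norm_real, Real.norm_eq_abs]
    have hlt : |s - θ| < ε' := by
      rwa [Real.dist_eq, abs_sub_comm] at hds
    have hle1 : ‖(((s : ℝ) - θ : ℝ) : ℂ) * I‖ ≤ 1 := by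
      rw [habsI]; exact le_of_lt (lt_of_lt_of_le hlt (min_le_right _ _))
    have hbound := Complex.norm_exp_sub_one_le hle1
    rw [habsI] at hbound
    have habsθ : ‖Complex.exp ((θ : ℂ) * I)‖ = 1 := by
      rw [hexpζ]; exact hζ
    calc ‖μ ^ m - ζ‖
        = ‖Complex.exp (((s : ℝ) - θ : ℝ) * I) - 1‖ := by
          rw [hfactor, norm_mul, habsθ, one_mul]
      _ ≤ 2 * |s - θ| := hbound
      _ < 2 * ε' := by linarith
      _ ≤ 2 * (ε / 2) := by
          have := min_le_left (ε / 2) 1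
          linarith [this]
      _ = ε := by ring
  · -- cyclic case: contradiction with μ not a root of unity
    exfalso
    have hαS : α ∈ S := AddSubgroup.subset_closure (by simp)
    have hπS : (2 * Real.pi) ∈ S := AddSubgroup.subset_closure (by simp)
    rw [ha, AddSubgroup.mem_closure_singleton] at hαS hπS
    obtain ⟨p, hp⟩ := hαS
    obtain ⟨q, hq⟩ := hπS
    have hq0 : q ≠ 0 := by
      rintro rfl
      rw [zero_zsmul] at hq
      have : (0:ℝ) < 2 * Real.pi := by positivity
      rw [← hq] at this; exact lt_irrefl 0 this
    have hkey : (q : ℝ) * α = (p : ℝ) * (2 * Real.pi) := by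
      rw [← hp, ← hq]
      push_cast [zsmul_eq_mul]
      ring
    have hμq : μ ^ (q : ℤ) = 1 := by
      rw [← hexpμ, ← Complex.exp_int_mul]
      rw [show ((q : ℂ) * ((α : ℂ) * I)) = ((q : ℝ) * α : ℝ) * I by push_cast; ring]
      rw [hkey]
      rw [show (((p : ℝ) * (2 * Real.pi) : ℝ) : ℂ) * I = (p : ℂ) * (2 * Real.pi * I) by
        push_cast; ring]
      exact Complex.exp_int_mul_two_pi_mul_I p
    have hnat : μ ^ q.natAbs = 1 := by
      rcases Int.natAbs_eq q with h | h
      · rw [← zpow_natCast, ← h, hμq]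
      · rw [← zpow_natCast]
        have h2 : μ ^ (q.natAbs : ℤ) = (μ ^ (q : ℤ))⁻¹ := by
          rw [← zpow_neg]
          congr 1
          omega
        rw [h2, hμq, inv_one]
    exact hμroot q.natAbs (Int.natAbs_pos.mpr hq0) hnat

/-- The inner part of the complement of a compact planar set cannot be
invariant near a boundary point under an irrational rotation: if `E ⊂ ℂ` is
compact with empty interior, `Inn(E)` (union of bounded complementary
components) and `Out(E)` (the unbounded component) are both nonempty, every
point of `E` is accumulated by both `Inn(E)` and `Out(E)`, `0 ∈ E`, and there
is `μ` of modulus `1`, not a root of unity, with `δ ∈ Inn(E) ⟺ μδ ∈ Inn(E)`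
for all small `δ`, then a contradiction follows. -/
theorem stmt17 (E : Set ℂ) (hEc : IsCompact E) (hEint : interior E = ∅)
    (Inn Out : Set ℂ)
    (hInn : Inn = {z : ℂ | z ∉ E ∧ Bornology.IsBounded (connectedComponentIn Eᶜ z)})
    (hOut : Out = {z : ℂ | z ∉ E ∧ ¬ Bornology.IsBounded (connectedComponentIn Eᶜ z)})
    (hInne : Inn.Nonempty) (hOute : Out.Nonempty)
    (hacc : ∀ x ∈ E, x ∈ closure Inn ∧ x ∈ closure Out)
    (h0 : (0 : ℂ) ∈ E)
    (μ : ℂ) (hμ : ‖μ‖ = 1) (hμroot : ∀ n : ℕ, 0 < n → μ ^ n ≠ 1)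
    (hrot : ∃ r > 0, ∀ δ : ℂ, ‖δ‖ < r → (δ ∈ Inn ↔ μ * δ ∈ Inn)) :
    False := by
  obtain ⟨r, hr, hrotr⟩ := hrot
  have hEopen : IsOpen Eᶜ := hEc.isClosed.isOpen_compl
  have hμ0 : μ ≠ 0 := by
    intro h; rw [h] at hμ; simp at hμ
  -- `Out` is open
  have hOutOpen : IsOpen Out := by
    rw [isOpen_iff_forall_mem_open]
    intro z hz
    rw [hOut] at hz
    refine ⟨connectedComponentIn Eᶜ z, ?_, hEopen.connectedComponentIn, ?_⟩
    · intro y hy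
      have hyE : y ∈ Eᶜ := connectedComponentIn_subset Eᶜ z hy
      have heq : connectedComponentIn Eᶜ y = connectedComponentIn Eᶜ z :=
        (connectedComponentIn_eq hy).symm
      rw [hOut]
      exact ⟨hyE, by rw [heq]; exact hz.2⟩
    · exact mem_connectedComponentIn hz.1
  -- pick `δ ∈ Inn` with `|δ| < r`
  have h0cl := hacc 0 h0
  obtain ⟨δ, hδInn, hδr⟩ : ∃ δ ∈ Inn, ‖δ‖ < r := by
    obtain ⟨b, hb, hd⟩ := Metric.mem_closure_iff.mp h0cl.1 r hr
    refine ⟨b, hb, ?_⟩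
    rwa [dist_zero_left] at hd
  have hδE : δ ∉ E := by rw [hInn] at hδInn; exact hδInn.1
  have hδ0 : δ ≠ 0 := by rintro rfl; exact hδE h0
  have hδpos : 0 < ‖δ‖ := by
    simpa [norm_pos_iff] using hδ0
  -- pick `w ∈ Out` with `|w| < |δ|`
  obtain ⟨w, hwOut, hwδ⟩ : ∃ w ∈ Out, ‖w‖ < ‖δ‖ := by
    obtain ⟨b, hb, hd⟩ := Metric.mem_closure_iff.mp h0cl.2 _ hδpos
    refine ⟨b, hb, ?_⟩
    rwa [dist_zero_left] at hd
  -- all integer rotates of δ stay in Inn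
  have habsm : ∀ m : ℤ, ‖μ ^ m * δ‖ = ‖δ‖ := by
    intro m
    rw [norm_mul, norm_zpow, hμ, one_zpow, one_mul]
  have key : ∀ m : ℤ, μ ^ m * δ ∈ Inn := by
    intro m
    induction m using Int.induction_on with
    | zero => simpa using hδInn
    | succ n ih =>
        have hlt : ‖μ ^ (n : ℤ) * δ‖ < r := by rw [habsm]; exact hδr
        have := (hrotr _ hlt).mp ih
        have hrw : μ * (μ ^ (n : ℤ) * δ) = μ ^ ((n : ℤ) + 1) * δ := by
          rw [zpow_add_one₀ hμ0]; ring
        rwa [hrw] at this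
    | pred n ih =>
        have hlt : ‖μ ^ (-(n : ℤ) - 1) * δ‖ < r := by rw [habsm]; exact hδr
        have hrw : μ * (μ ^ (-(n : ℤ) - 1) * δ) = μ ^ (-(n : ℤ)) * δ := by
          rw [show (-(n : ℤ)) = (-(n : ℤ) - 1) + 1 by ring, zpow_add_one₀ hμ0]; ring
        exact (hrotr _ hlt).mpr (by rwa [hrw])
  -- the unbounded component of w contains a point of modulus |δ|
  have hwE : w ∈ Eᶜ := by rw [hOut] at hwOut; exact hwOut.1
  set C : Set ℂ := connectedComponentIn Eᶜ w with hC
  have hCconn : IsConnected C := (isConnected_connectedComponentIn_iff).mpr hwE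
  have hCOut : C ⊆ Out := by
    intro y hy
    have hyE : y ∈ Eᶜ := connectedComponentIn_subset Eᶜ w hy
    have heq : connectedComponentIn Eᶜ y = C := (connectedComponentIn_eq hy).symm
    rw [hOut]
    refine ⟨hyE, ?_⟩
    rw [heq]
    rw [hOut] at hwOut; exact hwOut.2
  have hCub : ¬ Bornology.IsBounded C := by rw [hOut] at hwOut; exact hwOut.2
  obtain ⟨z, hzC, hzabs⟩ : ∃ z ∈ C, ‖δ‖ < ‖z‖ := by
    by_contra h
    push_neg at h
    apply hCub
    refine (Metric.isBounded_closedBall (x := (0:ℂ)) (r := ‖δ‖)).subset ?_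
    intro y hy
    rw [Metric.mem_closedBall, dist_zero_right]
    exact h y hy
  have himg : IsPreconnected ((norm : ℂ → ℝ) '' C) :=
    hCconn.isPreconnected.image _ continuous_norm.continuousOn
  have hmemδ : ‖δ‖ ∈ (norm : ℂ → ℝ) '' C := by
    have hIcc : Set.Icc (‖w‖) (‖z‖) ⊆ (norm : ℂ → ℝ) '' C :=
      himg.Icc_subset ⟨w, mem_connectedComponentIn hwE, rfl⟩ ⟨z, hzC, rfl⟩
    exact hIcc ⟨le_of_lt hwδ, le_of_lt hzabs⟩
  obtain ⟨x, hxC, hxabs⟩ := hmemδ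
  have hxOut : x ∈ Out := hCOut hxC
  -- a small ball around x inside Out
  obtain ⟨ε, hε, hball⟩ := Metric.isOpen_iff.mp hOutOpen x hxOut
  -- approximate x by a rotate of δ
  have hζ : ‖x / δ‖ = 1 := by
    rw [norm_div, hxabs, div_self (ne_of_gt hδpos)]
  obtain ⟨m, hm⟩ := dense_zpow_circle μ hμ hμroot (x / δ) hζ
    (div_pos hε hδpos)
  have hclose : μ ^ m * δ ∈ Metric.ball x ε := by
    rw [Metric.mem_ball, dist_eq_norm]
    have : μ ^ m * δ - x = (μ ^ m - x / δ) * δ := by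
      field_simp
    rw [this, norm_mul]
    calc ‖μ ^ m - x / δ‖ * ‖δ‖
        < (ε / ‖δ‖) * ‖δ‖ := by
          exact mul_lt_mul_of_pos_right hm hδpos
      _ = ε := div_mul_cancel₀ ε (ne_of_gt hδpos)
  have hInnm := key m
  have hOutm : μ ^ m * δ ∈ Out := hball hclose
  rw [hInn] at hInnm
  rw [hOut] at hOutm
  exact hOutm.2 hInnm.2
end
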